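/- ε-Young inequality: Let ψ : ℝ≥0 → ℝ≥0 be an N-function such that both ψ and its Fenchel conjugate ψ* satisfy the Δ₂-condition, with Δ₂-constants Δ₂(ψ) and Δ₂(ψ*). Then for every ε > 0 there exists a constant c_ε > 0, depending only on ε, Δ₂(ψ) and Δ₂(ψ*), such that for all r, s ≥ 0: s·r ≤ c_ε ψ*(s) + ε ψ(r). -/

import Mathlib

open MeasureTheory Filter

/-- The Fenchel conjugate `ψ*(r) = sup_{s ≥ 0} (r·s − ψ(s))`. -/
noncomputable def fconj (ψ : ℝ → ℝ) (r : ℝ) : ℝ :=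
  ⨆ s : NNReal, (r * (s : ℝ) - ψ (s : ℝ))

theorem stmt16 (Δψ Δψs : ℝ) (ε : ℝ) (hε : 0 < ε) :
    ∃ cε : ℝ, 0 < cε ∧
      ∀ ψ : ℝ → ℝ,
        ConvexOn ℝ (Set.Ici (0 : ℝ)) ψ →
        ψ 0 = 0 →
        (∀ r : ℝ, 0 < r → 0 < ψ r) →
        Tendsto (fun r => ψ r / r) (nhdsWithin 0 (Set.Ioi (0 : ℝ))) (nhds 0) →
        Tendsto (fun r => ψ r / r) atTop atTop →
        2 < Δψ → (∀ r : ℝ, 0 ≤ r → ψ (2 * r) ≤ Δψ * ψ r) →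
        2 < Δψs → (∀ r : ℝ, 0 ≤ r → fconj ψ (2 * r) ≤ Δψs * fconj ψ r) →
        ∀ r : ℝ, 0 ≤ r → ∀ t : ℝ, 0 ≤ t →
          t * r ≤ cε * fconj ψ t + ε * ψ r := by
  set a : ℝ := min ε 1 with ha
  have ha0 : 0 < a := lt_min hε one_pos
  have ha1 : a ≤ 1 := min_le_right _ _
  obtain ⟨k, hk⟩ : ∃ k : ℕ, 1 / a < 2 ^ k := pow_unbounded_of_one_lt _ one_lt_two
  refine ⟨(max Δψs 1) ^ k, pow_pos (lt_of_lt_of_le one_pos (le_max_right _ _)) k, ?_⟩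
  intro ψ hconv h0 hpos hzero hinf hΔψ hΔ hΔψs hΔs r hr t ht
  have hmax : max Δψs 1 = Δψs := max_eq_left (le_of_lt (lt_trans one_lt_two hΔψs))
  have hΔs0 : (0:ℝ) < Δψs := lt_trans two_pos hΔψs
  -- ψ is nonnegative on [0, ∞)
  have hψnn : ∀ x : ℝ, 0 ≤ x → 0 ≤ ψ x := by
    intro x hx
    rcases hx.eq_or_lt with h | h
    · simp [← h, h0]
    · exact (hpos x h).le
  -- the family defining fconj is bounded above
  have hbdd : ∀ u : ℝ, BddAbove (Set.range fun s : NNReal => u * (s:ℝ) - ψ s) := by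
    intro u
    obtain ⟨M, hM⟩ := eventually_atTop.mp (hinf.eventually_ge_atTop u)
    refine ⟨|u| * max M 1, ?_⟩
    rintro y ⟨s, rfl⟩
    have hs : (0:ℝ) ≤ (s:ℝ) := s.2
    by_cases hsM : (s:ℝ) ≤ max M 1
    · have h1 : u * (s:ℝ) ≤ |u| * (s:ℝ) :=
        mul_le_mul_of_nonneg_right (le_abs_self u) hs
      have h2 : |u| * (s:ℝ) ≤ |u| * max M 1 :=
        mul_le_mul_of_nonneg_left hsM (abs_nonneg u)
      have := hψnn s hs
      simp only
      linarith
    · push_neg at hsM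
      have hs1 : (1:ℝ) ≤ (s:ℝ) := le_trans (le_max_right M 1) hsM.le
      have hsp : (0:ℝ) < (s:ℝ) := lt_of_lt_of_le one_pos hs1
      have hMs := hM s (le_trans (le_max_left M 1) hsM.le)
      have hψs : u * (s:ℝ) ≤ ψ s := by
        rw [le_div_iff₀ hsp] at hMs; linarith
      have hnn : (0:ℝ) ≤ |u| * max M 1 :=
        mul_nonneg (abs_nonneg u) (le_trans zero_le_one (le_max_right M 1))
      simp only
      linarith
  -- fconj is nonnegative
  have hfnn : ∀ u : ℝ, 0 ≤ fconj ψ u := by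
    intro u
    have := le_ciSup (hbdd u) (0 : NNReal)
    simpa [fconj, h0] using this
  -- fconj is monotone
  have hmono : ∀ u v : ℝ, u ≤ v → fconj ψ u ≤ fconj ψ v := by
    intro u v huv
    exact ciSup_mono (hbdd v) fun s =>
      sub_le_sub_right (mul_le_mul_of_nonneg_right huv s.2) _
  -- Young's inequality
  have young : ∀ u v : ℝ, 0 ≤ v → u * v ≤ fconj ψ u + ψ v := by
    intro u v hv
    have := le_ciSup (hbdd u) (⟨v, hv⟩ : NNReal)
    simp only [fconj, NNReal.coe_mk] at this ⊢
    have e : u * v - ψ v ≤ ⨆ s : NNReal, u * (s:ℝ) - ψ s := this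
    linarith
  -- iterated Δ₂ for fconj
  have hiter : ∀ n : ℕ, ∀ u : ℝ, 0 ≤ u → fconj ψ (2 ^ n * u) ≤ Δψs ^ n * fconj ψ u := by
    intro n
    induction n with
    | zero => intro u _; simp
    | succ n ih =>
      intro u hu
      have h2 : (2:ℝ) ^ (n + 1) * u = 2 * (2 ^ n * u) := by ring
      rw [h2]
      calc fconj ψ (2 * (2 ^ n * u)) ≤ Δψs * fconj ψ (2 ^ n * u) :=
            hΔs _ (by positivity)
        _ ≤ Δψs * (Δψs ^ n * fconj ψ u) :=
            mul_le_mul_of_nonneg_left (ih u hu) hΔs0.le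
        _ = Δψs ^ (n + 1) * fconj ψ u := by ring
  -- convexity scaling: ψ (a r) ≤ a ψ r
  have hscale : ψ (a * r) ≤ a * ψ r := by
    have := hconv.2 (Set.mem_Ici.mpr hr) (Set.mem_Ici.mpr le_rfl) ha0.le
      (by linarith : (0:ℝ) ≤ 1 - a) (by ring)
    simpa [h0, smul_eq_mul] using this
  -- final assembly
  have key : t * r = (t / a) * (a * r) := by field_simp
  have h1 : (t / a) * (a * r) ≤ fconj ψ (t / a) + ψ (a * r) :=
    young _ _ (by positivity)
  have h2 : fconj ψ (t / a) ≤ fconj ψ (2 ^ k * t) := by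
    apply hmono
    rw [div_eq_mul_inv, mul_comm]
    apply mul_le_mul_of_nonneg_right _ ht
    rw [← one_div]
    exact hk.le
  have h3 : fconj ψ (2 ^ k * t) ≤ Δψs ^ k * fconj ψ t := hiter k t ht
  have h4 : ψ (a * r) ≤ ε * ψ r :=
    le_trans hscale (mul_le_mul_of_nonneg_right (min_le_left ε 1) (hψnn r hr))
  rw [hmax, key]
  linarith
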